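/- Zero-sum margin bound: if P2's subgame strategy σ^S_2 satisfies margin M(I_1) = α(I_1) - v(I_1) ≥ m for all root infosets I_1 and some m ≥ 0, then P1's best-response value of the augmented Resolving game is at most the π_{-1}-weighted average of α(I_1) minus m·q, where q is the total probability a best-responding P1 enters the subgame; in particular it is at most the weighted average of α(I_1). -/
import Mathlib


/-- **Zero-sum margin bound.** In the Resolving augmented game (chance over root
infosets with weights `w I ≥ 0` summing to 1; player 1 chooses the alternative
payoff `α I` or enters with value `v I`), if player 2's subgame strategy gives
every infoset margin `α I - v I ≥ m ≥ 0`, and `e` is a player-1 best response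
with total entering probability `q = ∑ I, w I * e I`, then player 1's
best-response value `U e` is at most `(∑ I, w I * α I) - m·q`; in particular it
is at most the weighted average of the alternative payoffs. -/
theorem resolving_margin_bound
    {ι : Type*} [Fintype ι]
    (w : ι → ℝ) (hw : ∀ I, 0 ≤ w I) (hw1 : ∑ I, w I = 1)
    (α v : ι → ℝ) (m : ℝ) (hm : 0 ≤ m)
    (hmargin : ∀ I, m ≤ α I - v I)
    (U : (ι → ℝ) → ℝ)
    (hU : ∀ e : ι → ℝ, U e = ∑ I, w I * (e I * v I + (1 - e I) * α I))
    (e : ι → ℝ) (he : ∀ I, e I ∈ Set.Icc (0:ℝ) 1)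
    (hBR : ∀ e' : ι → ℝ, (∀ I, e' I ∈ Set.Icc (0:ℝ) 1) → U e' ≤ U e)
    (q : ℝ) (hq : q = ∑ I, w I * e I) :
    U e ≤ (∑ I, w I * α I) - m * q ∧ U e ≤ ∑ I, w I * α I := by
  have key : U e ≤ (∑ I, w I * α I) - m * q := by
    rw [hU, hq, Finset.mul_sum, ← Finset.sum_sub_distrib]
    apply Finset.sum_le_sum
    intro I _
    have h1 := (he I).1
    have h2 := hmargin I
    have hwI := hw I
    nlinarith [mul_nonneg (mul_nonneg hwI h1) (show (0:ℝ) ≤ α I - v I - m by linarith)]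
  refine ⟨key, key.trans ?_⟩
  have hq0 : 0 ≤ q := by
    rw [hq]; exact Finset.sum_nonneg fun I _ => mul_nonneg (hw I) (he I).1
  nlinarith
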